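/- arXiv:1508.00385 — 7 statements merged into one kernel-verified Lean document; each statement's English description precedes it below -/
import Mathlib

section
/- Let n ≥ 3 and let γ_1 ≥ γ_2 ≥ ... ≥ γ_{n-1} ≥ 0 be reals with ∑_{i=1}^{n-1} γ_i = n and γ_1 ≥ α for some α ≥ n/(n-1). Then ∑_{i=1}^{n-1} e^{γ_i - 1} + e^{-1} ≥ e^{-1} + e^{α-1} + (n-2)·e^{(2-α)/(n-2)}. -/
open Real BigOperators

lemma tangent_exp (a x : ℝ) : Real.exp a * (x - a + 1) ≤ Real.exp x := by
  have h := Real.add_one_le_exp (x - a)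
  calc Real.exp a * (x - a + 1) ≤ Real.exp a * Real.exp (x - a) :=
        mul_le_mul_of_nonneg_left h (Real.exp_pos a).le
    _ = Real.exp x := by rw [← Real.exp_add]; ring_nf

theorem stmt_6 {n : ℕ} (hn : 3 ≤ n) (γ : Fin (n - 1) → ℝ) (hmono : Antitone γ)
    (hpos : ∀ i, 0 ≤ γ i) (hsum : ∑ i, γ i = n) (α : ℝ)
    (hα : (n : ℝ) / (n - 1) ≤ α) (h1 : α ≤ γ ⟨0, by omega⟩) :
    (∑ i, Real.exp (γ i - 1)) + Real.exp (-1) ≥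
      Real.exp (-1) + Real.exp (α - 1) + ((n : ℝ) - 2) * Real.exp ((2 - α) / ((n : ℝ) - 2)) := by
  obtain ⟨m, rfl⟩ : ∃ m, n = m + 3 := ⟨n - 3, by omega⟩
  have hcast : ((m + 3 : ℕ) : ℝ) - 2 = (m : ℝ) + 1 := by push_cast; ring
  set β : ℝ := (2 - α) / ((m : ℝ) + 1) with hβdef
  rw [hcast]
  have hm1 : (0 : ℝ) < (m : ℝ) + 1 := by positivity
  set z : ℝ := γ ⟨0, by omega⟩ with hz
  -- split sums
  have hsplit : ∀ f : Fin (m + 2) → ℝ,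
      ∑ i : Fin (m + 2), f i = f 0 + ∑ j : Fin (m + 1), f j.succ := fun f =>
    Fin.sum_univ_succ f
  have h0 : γ (0 : Fin (m + 2)) = z := rfl
  have hS : ∑ j : Fin (m + 1), γ (Fin.succ j) = ((m : ℝ) + 3) - z := by
    have hsum2 : ∑ i : Fin (m + 2), γ i = ((m + 3 : ℕ) : ℝ) := hsum
    have := hsplit γ
    rw [h0] at this
    rw [this] at hsum2
    push_cast at hsum2
    linarith
  -- tail bound
  have htail : Real.exp β * (((m : ℝ) + 3 - z) - ((m : ℝ) + 1) * β)
      ≤ ∑ j : Fin (m + 1), Real.exp (γ (Fin.succ j) - 1) := by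
    have : ∀ j : Fin (m + 1),
        Real.exp β * (γ (Fin.succ j) - 1 - β + 1) ≤ Real.exp (γ (Fin.succ j) - 1) :=
      fun j => tangent_exp β _
    calc Real.exp β * (((m : ℝ) + 3 - z) - ((m : ℝ) + 1) * β)
        = ∑ j : Fin (m + 1), Real.exp β * (γ (Fin.succ j) - 1 - β + 1) := by
          rw [← Finset.mul_sum]
          congr 1
          rw [Finset.sum_add_distrib, Finset.sum_sub_distrib, Finset.sum_sub_distrib, hS]
          simp
          ring
      _ ≤ _ := Finset.sum_le_sum fun j _ => this j
  -- head bound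
  have hhead : Real.exp (α - 1) * (z - α + 1) ≤ Real.exp (z - 1) := by
    have := tangent_exp (α - 1) (z - 1)
    calc Real.exp (α - 1) * (z - α + 1)
        = Real.exp (α - 1) * ((z - 1) - (α - 1) + 1) := by ring_nf
      _ ≤ _ := this
  -- exp comparison
  have hαβ : Real.exp β ≤ Real.exp (α - 1) := by
    apply Real.exp_le_exp.mpr
    have h2 : ((m : ℝ) + 3) ≤ α * ((m : ℝ) + 2) := by
      have hd : ((m + 3 : ℕ) : ℝ) / (((m + 3 : ℕ) : ℝ) - 1) ≤ α := hα
      have hc : ((m + 3 : ℕ) : ℝ) - 1 = (m : ℝ) + 2 := by push_cast; ring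
      rw [hc] at hd
      have : ((m + 3 : ℕ) : ℝ) ≤ α * ((m : ℝ) + 2) := by
        rw [div_le_iff₀ (by positivity)] at hd
        linarith
      push_cast at this; linarith
    rw [hβdef, div_le_iff₀ hm1]
    nlinarith
  have hβ0 : 0 < Real.exp β := Real.exp_pos β
  have hα0 : 0 < Real.exp (α - 1) := Real.exp_pos _
  have hmain : Real.exp (α - 1) + ((m : ℝ) + 1) * Real.exp β
      ≤ ∑ i : Fin (m + 2), Real.exp (γ i - 1) := by
    rw [hsplit (fun i => Real.exp (γ i - 1)), h0]
    have hlin : Real.exp (α - 1) + ((m : ℝ) + 1) * Real.exp β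
        ≤ Real.exp (α - 1) * (z - α + 1)
          + Real.exp β * (((m : ℝ) + 3 - z) - ((m : ℝ) + 1) * β) := by
      have hβval : ((m : ℝ) + 1) * β = 2 - α := by
        rw [hβdef]; field_simp
      rw [hβval]
      nlinarith [mul_le_mul_of_nonneg_left hαβ (show (0:ℝ) ≤ z - α by linarith)]
    linarith
  have hfin : ∑ i : Fin (m + 3 - 1), Real.exp (γ i - 1) = ∑ i : Fin (m + 2), Real.exp (γ i - 1) := rfl
  rw [ge_iff_le, hfin]
  linarith
end

section
/- Let G be a simple connected graph on n ≥ 2 vertices with normalized Laplacian eigenvalues γ_1 ≥ ... ≥ γ_n = 0 summing to n. Then the normalized Laplacian Estrada index NEE(G) = ∑_{i=1}^n e^{γ_i − 1} satisfies NEE(G) ≥ (n−1)·e^{1/(n−1)} + e^{−1}. -/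
open Matrix Real BigOperators

/-- Normalized Laplacian `L(G) = I - D^{-1/2} A D^{-1/2}`. -/
noncomputable def normLap {n : ℕ} (G : SimpleGraph (Fin n)) [DecidableRel G.Adj] :
    Matrix (Fin n) (Fin n) ℝ :=
  1 - (Matrix.diagonal fun i => ((G.degree i : ℝ)) ^ (-(1:ℝ)/2)) * G.adjMatrix ℝ *
      (Matrix.diagonal fun i => ((G.degree i : ℝ)) ^ (-(1:ℝ)/2))

/-- Randić index `R_{-1}(G) = ∑_{(i,j)∈E} 1/(d_i d_j)` (each unordered edge counted once). -/
noncomputable def randic {n : ℕ} (G : SimpleGraph (Fin n)) [DecidableRel G.Adj] : ℝ :=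
  (1/2) * ∑ i, ∑ j ∈ G.neighborFinset i, (1 : ℝ) / (G.degree i * G.degree j)

section aux

variable {n : ℕ} (G : SimpleGraph (Fin n)) [DecidableRel G.Adj]

lemma degree_pos_of_conn (hn : 2 ≤ n) (hG : G.Connected) (v : Fin n) :
    0 < G.degree v := by
  rw [G.degree_pos_iff_exists_adj v]
  have : Nontrivial (Fin n) := Fin.nontrivial_iff_two_le.mpr hn
  obtain ⟨u, hu⟩ := exists_ne v
  obtain ⟨p⟩ := hG.preconnected v u
  cases p with
  | nil => exact absurd rfl hu.symm
  | cons h _ => exact ⟨_, h⟩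

lemma trace_normLap : (normLap G).trace = n := by
  simp only [normLap, Matrix.trace_sub, Matrix.trace_one, Fintype.card_fin]
  have : ((Matrix.diagonal fun i => ((G.degree i : ℝ)) ^ (-(1:ℝ)/2)) * G.adjMatrix ℝ *
      (Matrix.diagonal fun i => ((G.degree i : ℝ)) ^ (-(1:ℝ)/2))).trace = 0 := by
    rw [Matrix.trace]
    refine Finset.sum_eq_zero fun x _ => ?_
    rw [Matrix.diag_apply, Matrix.mul_diagonal, Matrix.diagonal_mul]
    simp
  rw [this]; ring

lemma sum_eig (hL : (normLap G).IsHermitian) :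
    ∑ i, hL.eigenvalues i = n := by
  have h := hL.spectral_theorem
  have hU : star (hL.eigenvectorUnitary : Matrix (Fin n) (Fin n) ℝ) *
      (hL.eigenvectorUnitary : Matrix (Fin n) (Fin n) ℝ) = 1 :=
    Unitary.coe_star_mul_self _
  have : (normLap G).trace = ∑ i, hL.eigenvalues i := by
    conv_lhs => rw [h, Unitary.conjStarAlgAut_apply]
    rw [Matrix.trace_mul_cycle, hU, Matrix.one_mul, Matrix.trace_diagonal]
    simp
  rw [← this, trace_normLap]

lemma exists_zero_eig (hn : 2 ≤ n) (hG : G.Connected) (hL : (normLap G).IsHermitian) :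
    ∃ k, hL.eigenvalues k = 0 := by
  have hdet : (normLap G).det = 0 := by
    rw [← Matrix.exists_mulVec_eq_zero_iff]
    refine ⟨fun i => ((G.degree i : ℝ)) ^ ((1:ℝ)/2), ?_, ?_⟩
    · intro h0
      have h1 := congrFun h0 ⟨0, by omega⟩
      have hd := degree_pos_of_conn G hn hG ⟨0, by omega⟩
      have : (0:ℝ) < ((G.degree (⟨0, by omega⟩ : Fin n) : ℝ)) ^ ((1:ℝ)/2) :=
        Real.rpow_pos_of_pos (by exact_mod_cast hd) _
      simp only [Pi.zero_apply] at h1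
      linarith
    · funext i
      have hpos : ∀ j, (0:ℝ) < (G.degree j : ℝ) := fun j => by
        exact_mod_cast degree_pos_of_conn G hn hG j
      simp only [normLap, Matrix.sub_mulVec, Matrix.one_mulVec, ← Matrix.mulVec_mulVec,
        Pi.sub_apply, Matrix.mulVec_diagonal, Pi.zero_apply]
      have hone : (fun j => ((G.degree j : ℝ)) ^ (-(1:ℝ)/2) * ((G.degree j : ℝ)) ^ ((1:ℝ)/2))
          = fun _ => (1:ℝ) := by
        funext j
        rw [← Real.rpow_add (hpos j)]
        norm_num
      rw [show (Matrix.diagonal fun i => ((G.degree i : ℝ)) ^ (-(1:ℝ)/2)) *ᵥ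
            (fun i => ((G.degree i : ℝ)) ^ ((1:ℝ)/2)) = fun _ => (1:ℝ) by
          funext j; rw [Matrix.mulVec_diagonal]; exact congrFun hone j]
      rw [SimpleGraph.adjMatrix_mulVec_apply]
      simp only [Finset.sum_const, SimpleGraph.card_neighborFinset_eq_degree, nsmul_eq_mul,
        mul_one]
      have e1 : ((G.degree i:ℝ))^(-(1:ℝ)/2) * ((G.degree i:ℝ))^(1:ℝ)
          = ((G.degree i:ℝ))^((1:ℝ)/2) := by
        rw [← Real.rpow_add (hpos i)]; norm_num
      rw [Real.rpow_one] at e1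
      linarith [e1]
  have hprod : ∏ i, hL.eigenvalues i = 0 := by
    have := hL.det_eq_prod_eigenvalues
    rw [hdet] at this
    exact_mod_cast this.symm
  obtain ⟨k, _, hk⟩ := Finset.prod_eq_zero_iff.mp hprod
  exact ⟨k, hk⟩

end aux

theorem stmt_7 {n : ℕ} (hn : 2 ≤ n) (G : SimpleGraph (Fin n)) [DecidableRel G.Adj]
    (hG : G.Connected) (hL : (normLap G).IsHermitian) :
    ∑ i, Real.exp (hL.eigenvalues i - 1) ≥
      ((n : ℝ) - 1) * Real.exp (1 / ((n : ℝ) - 1)) + Real.exp (-1) := by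
  obtain ⟨k, hk⟩ := exists_zero_eig G hn hG hL
  have hsum := sum_eig G hL
  set γ := hL.eigenvalues with hγ
  have hm : (0:ℝ) < (n:ℝ) - 1 := by
    have : (2:ℝ) ≤ n := by exact_mod_cast hn
    linarith
  set m : ℝ := (n:ℝ) - 1 with hmdef
  have hcard : ((Finset.univ.erase k).card : ℝ) = m := by
    rw [Finset.card_erase_of_mem (Finset.mem_univ k)]
    simp [hmdef]
    rw [Nat.cast_sub (by omega)]
    simp
  have hsplit : ∑ i, Real.exp (γ i - 1)
      = Real.exp (-1) + ∑ i ∈ Finset.univ.erase k, Real.exp (γ i - 1) := by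
    rw [← Finset.add_sum_erase _ _ (Finset.mem_univ k), hk]
    norm_num
  have hsumerase : ∑ i ∈ Finset.univ.erase k, γ i = n := by
    have := Finset.add_sum_erase Finset.univ γ (Finset.mem_univ k)
    rw [hk, zero_add] at this
    rw [this, hsum]
  have hterm : ∀ i ∈ Finset.univ.erase k,
      Real.exp (1/m) * (γ i - 1/m) ≤ Real.exp (γ i - 1) := by
    intro i _
    have h1 : γ i - 1/m ≤ Real.exp (γ i - 1 - 1/m) := by
      have := Real.add_one_le_exp (γ i - 1 - 1/m)
      linarith
    calc Real.exp (1/m) * (γ i - 1/m) ≤ Real.exp (1/m) * Real.exp (γ i - 1 - 1/m) := by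
          exact mul_le_mul_of_nonneg_left h1 (Real.exp_pos _).le
      _ = Real.exp (γ i - 1) := by rw [← Real.exp_add]; ring_nf
  have hlb : ∑ i ∈ Finset.univ.erase k, Real.exp (γ i - 1)
      ≥ m * Real.exp (1/m) := by
    calc ∑ i ∈ Finset.univ.erase k, Real.exp (γ i - 1)
        ≥ ∑ i ∈ Finset.univ.erase k, Real.exp (1/m) * (γ i - 1/m) :=
          Finset.sum_le_sum hterm
      _ = Real.exp (1/m) * (∑ i ∈ Finset.univ.erase k, γ i
            - ((Finset.univ.erase k).card : ℝ) * (1/m)) := by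
          simp only [mul_sub]
          rw [Finset.sum_sub_distrib, ← Finset.mul_sum, Finset.sum_const, nsmul_eq_mul]
          ring
      _ = m * Real.exp (1/m) := by
          rw [hsumerase, hcard]
          field_simp
          ring
  rw [hsplit]
  have : 1 / ((n:ℝ) - 1) = 1/m := rfl
  rw [this]
  linarith
end

section
/- Let n ≥ 4 and let γ_1 ≥ γ_2 ≥ ... ≥ γ_{n-1} ≥ 0 be reals summing to n, with γ_1 ≥ α, γ_2 ≥ β, α ≥ β, and α + β(n−2) > n. Then ∑_{i=1}^{n-1} e^{γ_i − 1} + e^{-1} ≥ e^{-1} + e^{α−1} + e^{β−1} + (n−3)·e^{(3−α−β)/(n−3)}. -/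
open Real BigOperators

/-- Tangent line bound for `exp` at base point `y`. -/
lemma exp_tangent (x y : ℝ) : Real.exp y * (x - y + 1) ≤ Real.exp x := by
  have h := Real.add_one_le_exp (x - y)
  have hy := Real.exp_pos y
  calc Real.exp y * (x - y + 1) ≤ Real.exp y * Real.exp (x - y) := by nlinarith
    _ = Real.exp x := by rw [← Real.exp_add]; ring_nf

lemma g_mono (c y x : ℝ) (hcy : c ≤ y) (hyx : y ≤ x) :
    Real.exp (y - 1) - Real.exp (c - 1) * (y - c + 1) ≤
      Real.exp (x - 1) - Real.exp (c - 1) * (x - c + 1) := by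
  have h1 : Real.exp (y - 1) * ((x - 1) - (y - 1) + 1) ≤ Real.exp (x - 1) :=
    exp_tangent (x - 1) (y - 1)
  have h2 : Real.exp (c - 1) ≤ Real.exp (y - 1) := Real.exp_le_exp.2 (by linarith)
  nlinarith [Real.exp_pos (c - 1)]

theorem stmt_8 {n : ℕ} (hn : 4 ≤ n) (γ : Fin (n - 1) → ℝ) (hmono : Antitone γ)
    (hpos : ∀ i, 0 ≤ γ i) (hsum : ∑ i, γ i = n) (α β : ℝ)
    (h1 : α ≤ γ ⟨0, by omega⟩) (h2 : β ≤ γ ⟨1, by omega⟩) (hαβ : β ≤ α)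
    (hcond : (n : ℝ) < α + β * ((n : ℝ) - 2)) :
    (∑ i, Real.exp (γ i - 1)) + Real.exp (-1) ≥
      Real.exp (-1) + Real.exp (α - 1) + Real.exp (β - 1) +
        ((n : ℝ) - 3) * Real.exp ((3 - α - β) / ((n : ℝ) - 3)) := by
  have hn4 : (4 : ℝ) ≤ (n : ℝ) := by exact_mod_cast hn
  have hn3 : (0 : ℝ) < (n : ℝ) - 3 := by linarith
  set c : ℝ := ((n : ℝ) - α - β) / ((n : ℝ) - 3) with hc
  have hcc : ((n : ℝ) - 3) * c = (n : ℝ) - α - β := by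
    rw [hc]; field_simp
  have hcβ : c ≤ β := by
    rw [hc, div_le_iff₀ hn3]; nlinarith
  have hcα : c ≤ α := le_trans hcβ hαβ
  have hexp : Real.exp ((3 - α - β) / ((n : ℝ) - 3)) = Real.exp (c - 1) := by
    congr 1
    rw [hc]
    field_simp
    ring
  set F : Fin (n - 1) → ℝ := fun i =>
    Real.exp (γ i - 1) - Real.exp (c - 1) * (γ i - c + 1) with hF
  have hF0 : ∀ i, 0 ≤ F i := by
    intro i
    have := exp_tangent (γ i - 1) (c - 1)
    simp only [hF]
    nlinarith
  -- indices 0 and 1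
  have hlt0 : 0 < n - 1 := by omega
  have hlt1 : 1 < n - 1 := by omega
  set i0 : Fin (n - 1) := ⟨0, hlt0⟩
  set i1 : Fin (n - 1) := ⟨1, hlt1⟩
  have hne : i0 ≠ i1 := by simp [i0, i1, Fin.ext_iff]
  have hFi0 : Real.exp (α - 1) - Real.exp (c - 1) * (α - c + 1) ≤ F i0 :=
    g_mono c α (γ i0) hcα h1
  have hFi1 : Real.exp (β - 1) - Real.exp (c - 1) * (β - c + 1) ≤ F i1 :=
    g_mono c β (γ i1) hcβ h2
  have hsub : ({i0, i1} : Finset (Fin (n - 1))) ⊆ Finset.univ := Finset.subset_univ _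
  have hkey : F i0 + F i1 ≤ ∑ i, F i := by
    have := Finset.sum_le_sum_of_subset_of_nonneg hsub (fun i _ _ => hF0 i)
    rwa [Finset.sum_pair hne] at this
  have hcard : ((Finset.univ : Finset (Fin (n - 1))).card : ℝ) = (n : ℝ) - 1 := by
    simp only [Finset.card_univ, Fintype.card_fin]
    have : (1 : ℕ) ≤ n := by omega
    push_cast [Nat.cast_sub this]
    ring
  have hsumF : ∑ i, F i =
      (∑ i, Real.exp (γ i - 1)) - Real.exp (c - 1) * ((n : ℝ) - ((n : ℝ) - 1) * c + ((n : ℝ) - 1)) := by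
    simp only [hF]
    rw [Finset.sum_sub_distrib, ← Finset.mul_sum]
    congr 2
    rw [Finset.sum_add_distrib, Finset.sum_sub_distrib, hsum]
    simp only [Finset.sum_const, nsmul_eq_mul, mul_one, smul_eq_mul]
    rw [hcard]
  have hfinal : Real.exp (c - 1) * ((n : ℝ) - ((n : ℝ) - 1) * c + ((n : ℝ) - 1)) =
      Real.exp (c - 1) * (α - c + 1) + Real.exp (c - 1) * (β - c + 1) +
        ((n : ℝ) - 3) * Real.exp (c - 1) := by
    have h : (n : ℝ) - ((n : ℝ) - 1) * c + ((n : ℝ) - 1) =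
        (α - c + 1) + (β - c + 1) + ((n : ℝ) - 3) := by linarith [hcc]
    rw [h]; ring
  rw [hexp]
  linarith [hkey, hsumF, hfinal, hFi0, hFi1]
end

section
/- Let G be a connected bipartite graph on n ≥ 3 vertices. Then NEE(G) = ∑_{i=1}^n e^{γ_i − 1} ≥ e^{-1} + e + (n − 2), where γ_i are the normalized Laplacian eigenvalues. -/
open Matrix Real BigOperators

lemma mem_spectrum_of_mulVec' {m : Type*} [Fintype m] [DecidableEq m]
    (M : Matrix m m ℝ) {μ : ℝ} {x : m → ℝ} (hx : x ≠ 0) (h : M *ᵥ x = μ • x) :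
    μ ∈ spectrum ℝ M := by
  rw [← AlgEquiv.spectrum_eq (Matrix.toLinAlgEquiv (Pi.basisFun ℝ m)),
    ← Module.End.hasEigenvalue_iff_mem_spectrum]
  refine Module.End.hasEigenvalue_of_hasEigenvector ⟨Module.End.mem_eigenspace_iff.mpr ?_, hx⟩
  exact h

lemma sum_eig_eq_trace' {m : Type*} [Fintype m] [DecidableEq m]
    {A : Matrix m m ℝ} (hA : A.IsHermitian) : ∑ i, hA.eigenvalues i = A.trace := by
  have h := congrArg Matrix.trace hA.spectral_theorem
  rw [Unitary.conjStarAlgAut_apply, Matrix.trace_mul_cycle] at h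
  rw [h]
  have : (star (Matrix.IsHermitian.eigenvectorUnitary hA : Matrix m m ℝ)) *
      (Matrix.IsHermitian.eigenvectorUnitary hA : Matrix m m ℝ) = 1 :=
    Unitary.coe_star_mul_self _
  rw [this, Matrix.one_mul, Matrix.trace_diagonal]
  simp

theorem stmt_9 {n : ℕ} (hn : 3 ≤ n) (G : SimpleGraph (Fin n)) [DecidableRel G.Adj]
    (hG : G.Connected) (hbip : G.Colorable 2) (hL : (normLap G).IsHermitian) :
    ∑ i, Real.exp (hL.eigenvalues i - 1) ≥
      Real.exp (-1) + Real.exp 1 + ((n : ℝ) - 2) := by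
  classical
  -- degrees are positive
  have hdeg : ∀ i, 0 < G.degree i := by
    intro i
    rw [G.degree_pos_iff_exists_adj]
    have hcard : 1 < Fintype.card (Fin n) := by simp; omega
    obtain ⟨w, hw⟩ := Fintype.exists_ne_of_one_lt_card hcard i
    obtain ⟨p⟩ := hG.preconnected i w
    cases p with
    | nil => exact absurd rfl hw.symm
    | cons h q => exact ⟨_, h⟩
  have hdpos : ∀ i, (0:ℝ) < (G.degree i : ℝ) := fun i => by exact_mod_cast hdeg i
  set c : Fin n → ℝ := fun i => ((G.degree i : ℝ)) ^ (-(1:ℝ)/2) with hc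
  have hcd : ∀ i, c i * ((G.degree i : ℝ)) ^ ((1:ℝ)/2) = 1 := fun i => by
    rw [hc, ← Real.rpow_add (hdpos i)]; norm_num
  have hcd1 : ∀ i, c i * ((G.degree i : ℝ)) = ((G.degree i : ℝ)) ^ ((1:ℝ)/2) := fun i =>
    calc c i * ((G.degree i : ℝ))
        = ((G.degree i : ℝ)) ^ (-(1:ℝ)/2) * ((G.degree i : ℝ)) ^ (1:ℝ) := by
          rw [hc, Real.rpow_one]
      _ = ((G.degree i : ℝ)) ^ ((-(1:ℝ)/2) + 1) := (Real.rpow_add (hdpos i) _ _).symm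
      _ = ((G.degree i : ℝ)) ^ ((1:ℝ)/2) := by norm_num
  -- bipartite coloring and sign vector
  obtain ⟨C⟩ := hbip
  set s : Fin n → ℝ := fun i => if C i = 0 then 1 else -1 with hs
  have hs1 : ∀ i, s i = 1 ∨ s i = -1 := fun i => by rw [hs]; dsimp only; split <;> simp
  have hfin2 : ∀ a : Fin 2, a = 0 ∨ a = 1 := by decide
  have hsadj : ∀ {i j}, G.Adj i j → s j = -s i := by
    intro i j hij
    have hne := C.valid hij
    rcases hfin2 (C i) with h1 | h1 <;> rcases hfin2 (C j) with h2 | h2 <;>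
      simp [hs, h1, h2] at hne ⊢
  -- the two eigenvectors
  set x : Fin n → ℝ := fun i => s i * ((G.degree i : ℝ)) ^ ((1:ℝ)/2) with hxdef
  set y : Fin n → ℝ := fun i => ((G.degree i : ℝ)) ^ ((1:ℝ)/2) with hydef
  have hDAD : ∀ (v : Fin n → ℝ) (i : Fin n),
      (((Matrix.diagonal c) * G.adjMatrix ℝ * (Matrix.diagonal c)) *ᵥ v) i
        = c i * ∑ j ∈ G.neighborFinset i, c j * v j := by
    intro v i
    rw [Matrix.mul_assoc, ← Matrix.mulVec_mulVec, Matrix.mulVec_diagonal,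
      ← Matrix.mulVec_mulVec, SimpleGraph.adjMatrix_mulVec_apply]
    congr 1
    exact Finset.sum_congr rfl fun j _ => Matrix.mulVec_diagonal _ _ _
  have hunfold : normLap G =
      1 - (Matrix.diagonal c) * G.adjMatrix ℝ * (Matrix.diagonal c) := by
    rw [normLap, hc]
  -- eigen-equation for 2
  have hx2 : normLap G *ᵥ x = (2:ℝ) • x := by
    funext i
    rw [hunfold, Matrix.sub_mulVec, Matrix.one_mulVec, Pi.sub_apply, hDAD]
    have hsum : ∑ j ∈ G.neighborFinset i, c j * x j = (G.degree i : ℝ) * (-s i) := by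
      rw [Finset.sum_congr rfl (fun j hj => ?_)]
      · rw [Finset.sum_const, SimpleGraph.card_neighborFinset_eq_degree, nsmul_eq_mul]
      · rw [SimpleGraph.mem_neighborFinset] at hj
        show c j * x j = -s i
        rw [hxdef]; dsimp only
        rw [← mul_assoc, mul_comm (c j) (s j), mul_assoc, hcd j, mul_one, hsadj hj]
    rw [hsum]
    have : c i * ((G.degree i : ℝ) * (-s i)) = -x i := by
      rw [hxdef]; dsimp only
      rw [show c i * ((G.degree i : ℝ) * (-s i)) = -(s i * (c i * (G.degree i : ℝ))) by ring,
        hcd1 i]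
    rw [this]
    simp only [Pi.smul_apply, smul_eq_mul]; ring
  -- eigen-equation for 0
  have hy0 : normLap G *ᵥ y = (0:ℝ) • y := by
    funext i
    rw [hunfold, Matrix.sub_mulVec, Matrix.one_mulVec, Pi.sub_apply, hDAD]
    have hsum : ∑ j ∈ G.neighborFinset i, c j * y j = (G.degree i : ℝ) := by
      rw [Finset.sum_congr rfl (fun j hj => hcd j), Finset.sum_const,
        SimpleGraph.card_neighborFinset_eq_degree, nsmul_eq_mul, mul_one]
    rw [hsum]
    have : c i * (G.degree i : ℝ) = y i := hcd1 i
    rw [this]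
    simp
  -- nonzero vectors
  have hi₀ : (0:ℝ) < ((G.degree (⟨0, by omega⟩ : Fin n) : ℝ)) ^ ((1:ℝ)/2) :=
    Real.rpow_pos_of_pos (hdpos _) _
  have hxne : x ≠ 0 := by
    intro h
    have hx0 := congrFun h (⟨0, by omega⟩ : Fin n)
    rw [hxdef] at hx0; dsimp only at hx0
    rcases hs1 (⟨0, by omega⟩ : Fin n) with h1 | h1 <;> rw [h1] at hx0 <;>
      simp at hx0 <;> exact (hdeg _).ne' hx0
  have hyne : y ≠ 0 := by
    intro h
    have hy0' := congrFun h (⟨0, by omega⟩ : Fin n)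
    rw [hydef] at hy0'
    simp only [Pi.zero_apply] at hy0'
    exact absurd hy0' hi₀.ne'
  -- 2 and 0 are eigenvalues
  have h2mem : (2:ℝ) ∈ spectrum ℝ (normLap G) := mem_spectrum_of_mulVec' _ hxne hx2
  have h0mem : (0:ℝ) ∈ spectrum ℝ (normLap G) := mem_spectrum_of_mulVec' _ hyne hy0
  rw [hL.spectrum_real_eq_range_eigenvalues] at h2mem h0mem
  obtain ⟨i1, hi1⟩ := h2mem
  obtain ⟨i0, hi0⟩ := h0mem
  have hne01 : i0 ≠ i1 := by
    intro h; rw [h, hi1] at hi0; norm_num at hi0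
  -- trace of normalized laplacian is n
  have htr : (normLap G).trace = (n:ℝ) := by
    rw [hunfold, Matrix.trace_sub, Matrix.trace_one]
    have hz : ((Matrix.diagonal c) * G.adjMatrix ℝ * (Matrix.diagonal c)).trace = 0 := by
      rw [Matrix.trace]
      refine Finset.sum_eq_zero fun i _ => ?_
      rw [Matrix.diag_apply, Matrix.mul_diagonal, Matrix.diagonal_mul]
      simp
    rw [hz]; simp
  have hsum : ∑ i, hL.eigenvalues i = (n:ℝ) := by rw [sum_eig_eq_trace' hL, htr]
  -- split the sum
  have hsub : ({i0, i1} : Finset (Fin n)) ⊆ Finset.univ := Finset.subset_univ _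
  have hsplit : ∀ f : Fin n → ℝ, ∑ i, f i = ∑ i ∈ Finset.univ \ {i0, i1}, f i + (f i0 + f i1) := by
    intro f
    rw [← Finset.sum_sdiff hsub, Finset.sum_pair hne01]
  have hrest : ∑ i ∈ Finset.univ \ {i0, i1}, hL.eigenvalues i = (n:ℝ) - 2 := by
    have := hsplit hL.eigenvalues
    rw [hsum, hi0, hi1] at this
    linarith
  have hbound : ∀ i, hL.eigenvalues i ≤ Real.exp (hL.eigenvalues i - 1) := fun i => by
    have := Real.add_one_le_exp (hL.eigenvalues i - 1)
    linarith
  rw [hsplit (fun i => Real.exp (hL.eigenvalues i - 1))]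
  simp only [hi0, hi1]
  have hrestle : (n:ℝ) - 2 ≤ ∑ i ∈ Finset.univ \ {i0, i1}, Real.exp (hL.eigenvalues i - 1) := by
    rw [← hrest]
    exact Finset.sum_le_sum fun i _ => hbound i
  have e1 : (0:ℝ) - 1 = -1 := by norm_num
  have e2 : (2:ℝ) - 1 = 1 := by norm_num
  rw [e1, e2]
  linarith
end

section
/- Let G be a simple connected graph on n vertices with b = n + 2∑_{(i,j)∈E} 1/(d_i d_j) and h* = ⌊n²/b⌋ ≥ 1. Then Q := (n + √((b(h*+1) − n²)/h*))/(1 + h*) satisfies Q ≥ n/(n−1). -/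
open Matrix Real BigOperators

theorem stmt_15 {n : ℕ} (hn : 2 ≤ n) (G : SimpleGraph (Fin n)) [DecidableRel G.Adj]
    (hG : G.Connected) (b : ℝ) (hb : b = n + 2 * randic G)
    (hstar : ℕ) (hh : hstar = ⌊(n : ℝ) ^ 2 / b⌋₊) (hh1 : 1 ≤ hstar) :
    ((n : ℝ) + Real.sqrt ((b * (hstar + 1) - (n : ℝ) ^ 2) / hstar)) / (1 + hstar) ≥
      (n : ℝ) / ((n : ℝ) - 1) := by
  have hdpos : ∀ v : Fin n, 0 < G.degree v := by
    intro v
    rw [G.degree_pos_iff_exists_adj v]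
    obtain ⟨w, hw⟩ := Fintype.exists_ne_of_one_lt_card (by simp; omega) v
    obtain ⟨p⟩ := hG.preconnected v w
    cases p with
    | nil => exact absurd rfl hw.symm
    | cons h _ => exact ⟨_, h⟩
  set c : ℝ := (n : ℝ) - 1 with hc
  have hnR : (2:ℝ) ≤ n := by exact_mod_cast hn
  have hcpos : 0 < c := by simp [hc]; linarith
  have hd1 : ∀ v, (1:ℝ) ≤ (G.degree v : ℝ) := fun v => by exact_mod_cast hdpos v
  have hdc : ∀ v, (G.degree v : ℝ) ≤ c := by
    intro v
    have := G.degree_lt_card_verts v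
    simp only [Fintype.card_fin] at this
    have : (G.degree v : ℝ) ≤ (n:ℝ) - 1 := by
      have h2 : (G.degree v : ℝ) < n := by exact_mod_cast this
      have h3 : G.degree v ≤ n - 1 := by omega
      calc (G.degree v : ℝ) ≤ ((n-1 : ℕ) : ℝ) := by exact_mod_cast h3
        _ = (n:ℝ) - 1 := by push_cast [Nat.cast_sub (by omega : 1 ≤ n)]; ring
    exact this
  -- per-vertex bound
  have hsum : ∀ i, (1:ℝ)/c ≤ ∑ j ∈ G.neighborFinset i, (1:ℝ)/(G.degree i * G.degree j) := by
    intro i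
    have step : ∑ j ∈ G.neighborFinset i, (1:ℝ)/(G.degree i * c)
        ≤ ∑ j ∈ G.neighborFinset i, (1:ℝ)/(G.degree i * G.degree j) := by
      apply Finset.sum_le_sum
      intro j _
      apply one_div_le_one_div_of_le
      · exact mul_pos (by linarith [hd1 i]) (by linarith [hd1 j])
      · exact mul_le_mul_of_nonneg_left (hdc j) (by linarith [hd1 i])
    have hcard : ∑ j ∈ G.neighborFinset i, (1:ℝ)/(G.degree i * c)
        = (G.degree i : ℝ) * (1/(G.degree i * c)) := by
      rw [Finset.sum_const, G.card_neighborFinset_eq_degree, nsmul_eq_mul]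
    have hdi : (0:ℝ) < (G.degree i : ℝ) := by linarith [hd1 i]
    have : (G.degree i : ℝ) * (1/(G.degree i * c)) = 1/c := by
      field_simp
    linarith [step, hcard.symm ▸ step]
  have hR : (n:ℝ)/c ≤ 2 * randic G := by
    have : ∑ i : Fin n, (1:ℝ)/c ≤ ∑ i : Fin n, ∑ j ∈ G.neighborFinset i,
        (1:ℝ)/(G.degree i * G.degree j) := Finset.sum_le_sum fun i _ => hsum i
    simp only [Finset.sum_const, Finset.card_univ, Fintype.card_fin, nsmul_eq_mul] at this
    rw [randic]
    calc (n:ℝ)/c = (n:ℝ) * (1/c) := by ring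
      _ ≤ _ := by linarith
  have hbge : (n:ℝ)^2 / c ≤ b := by
    rw [hb]
    rw [div_le_iff₀ hcpos]
    have he : (n:ℝ)^2 = n * c + n := by simp [hc]; ring
    have h2Rc : (n:ℝ) ≤ 2 * randic G * c := by
      have := mul_le_mul_of_nonneg_right hR hcpos.le
      rwa [div_mul_cancel₀ _ (ne_of_gt hcpos)] at this
    nlinarith [h2Rc]
  have hbpos : 0 < b := lt_of_lt_of_le (by positivity) hbge
  have hfl : (hstar : ℝ) ≤ (n:ℝ)^2 / b := by
    rw [hh]; exact Nat.floor_le (by positivity)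
  have hfl2 : (n:ℝ)^2 / b < hstar + 1 := by
    rw [hh]; exact Nat.lt_floor_add_one _
  have hgt : (n:ℝ)^2 < b * (hstar + 1) := by
    rw [div_lt_iff₀ hbpos] at hfl2; linarith
  have hle : (hstar : ℝ) * b ≤ (n:ℝ)^2 := by
    rw [le_div_iff₀ hbpos] at hfl; linarith
  have hhc : (hstar : ℝ) ≤ c := by
    have : (hstar:ℝ) ≤ (n:ℝ)^2 / b := hfl
    have h2 : (n:ℝ)^2 / b ≤ c := by
      rw [div_le_iff₀ hbpos]
      have := mul_le_mul_of_nonneg_left hbge (le_of_lt hcpos)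
      calc (n:ℝ)^2 = c * ((n:ℝ)^2/c) := by field_simp
        _ ≤ c * b := mul_le_mul_of_nonneg_left hbge (le_of_lt hcpos)
    linarith
  have hhpos : (0:ℝ) < hstar := by exact_mod_cast hh1
  set s : ℝ := (b * (hstar + 1) - (n:ℝ)^2) / hstar with hs
  have hspos : 0 ≤ s := by
    apply div_nonneg _ (le_of_lt hhpos); linarith
  have hsqrt0 : 0 ≤ Real.sqrt s := Real.sqrt_nonneg s
  rw [ge_iff_le, div_le_div_iff₀ hcpos (by positivity : (0:ℝ) < 1 + hstar)]
  -- goal: n * (1 + hstar) ≤ (n + sqrt s) * c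
  by_cases hcase : (hstar : ℝ) = c
  · -- hstar = n - 1, need n ≤ c * sqrt s
    have hsge : (n:ℝ)^2/c^2 ≤ s := by
      rw [hs, hcase]
      rw [div_le_div_iff₀ (by positivity) hcpos]
      have hb2 : (n:ℝ)^2 ≤ b * c := by
        rw [div_le_iff₀ hcpos] at hbge; linarith
      have hcn : c + 1 = (n:ℝ) := by simp [hc]
      nlinarith [hb2, hcpos]
    have : (n:ℝ)/c ≤ Real.sqrt s := by
      rw [show (n:ℝ)/c = Real.sqrt (((n:ℝ)/c)^2) from
        (Real.sqrt_sq (by positivity)).symm]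
      apply Real.sqrt_le_sqrt
      rw [div_pow]; exact hsge
    rw [div_le_iff₀ hcpos] at this
    nlinarith [this]
  · have hlt : (hstar : ℝ) ≤ c - 1 := by
      have h1 : hstar ≤ n - 1 := by
        have : (hstar:ℝ) ≤ ((n-1:ℕ):ℝ) := by
          push_cast [Nat.cast_sub (by omega : 1 ≤ n)]; linarith [hhc]
        exact_mod_cast this
      have h2 : hstar ≠ n - 1 := by
        intro h; apply hcase
        rw [h]; push_cast [Nat.cast_sub (by omega : 1 ≤ n)]; ring
      have h3 : hstar ≤ n - 2 := by omega
      have : (hstar:ℝ) ≤ ((n-2:ℕ):ℝ) := by exact_mod_cast h3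
      rw [Nat.cast_sub (by omega : 2 ≤ n)] at this
      norm_num at this
      simp [hc]; linarith
    nlinarith [hsqrt0, hnR, hcpos]
end

section
/- Let n ≥ 3 and let b be a real with n²/(n−1) < b. Define Q = (n + √((b(h*+1) − n²)/h*))/(1 + h*) with h* = ⌊n²/b⌋ ≥ 1, and R = (n − √((b(n−1) − n²)/(n−2)))/(n−1). Then R ≤ Q. -/
open Real

theorem stmt_16 {n : ℕ} (hn : 3 ≤ n) (b : ℝ) (hb : (n : ℝ) ^ 2 / ((n : ℝ) - 1) < b)
    (hstar : ℕ) (hh : hstar = ⌊(n : ℝ) ^ 2 / b⌋₊) (hh1 : 1 ≤ hstar) :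
    ((n : ℝ) - Real.sqrt ((b * ((n : ℝ) - 1) - (n : ℝ) ^ 2) / ((n : ℝ) - 2))) / ((n : ℝ) - 1) ≤
      ((n : ℝ) + Real.sqrt ((b * (hstar + 1) - (n : ℝ) ^ 2) / hstar)) / (1 + hstar) := by
  have hn3 : (3:ℝ) ≤ (n:ℝ) := by exact_mod_cast hn
  have hn1 : (0:ℝ) < (n:ℝ) - 1 := by linarith
  have hb0 : (0:ℝ) < b := lt_of_le_of_lt (by positivity) hb
  have hdiv : (n:ℝ)^2 / b < (n:ℝ) - 1 := by
    rw [div_lt_iff₀ hb0]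
    have h2 := (div_lt_iff₀ hn1).mp hb
    linarith
  have hfl : (hstar:ℝ) < (n:ℝ) - 1 := by
    calc (hstar:ℝ) ≤ (n:ℝ)^2 / b := by
          rw [hh]; exact Nat.floor_le (by positivity)
      _ < (n:ℝ) - 1 := hdiv
  have hnat : hstar + 1 < n := by exact_mod_cast (by linarith : (hstar:ℝ)+1 < (n:ℝ))
  have hnat2 : hstar + 2 ≤ n := hnat
  have h1 : (1:ℝ) + (hstar:ℝ) ≤ (n:ℝ) - 1 := by
    have : (hstar:ℝ) + 2 ≤ (n:ℝ) := by exact_mod_cast hnat2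
    linarith
  have hden : (0:ℝ) < 1 + (hstar:ℝ) := by positivity
  have sB : 0 ≤ Real.sqrt ((b * ((n:ℝ) - 1) - (n:ℝ)^2) / ((n:ℝ) - 2)) := Real.sqrt_nonneg _
  have sA : 0 ≤ Real.sqrt ((b * ((hstar:ℝ) + 1) - (n:ℝ)^2) / (hstar:ℝ)) := Real.sqrt_nonneg _
  calc ((n:ℝ) - Real.sqrt ((b * ((n:ℝ) - 1) - (n:ℝ)^2) / ((n:ℝ) - 2))) / ((n:ℝ) - 1)
      ≤ (n:ℝ) / (1 + (hstar:ℝ)) := by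
        apply div_le_div₀ (by linarith) (by linarith) hden h1
    _ ≤ ((n:ℝ) + Real.sqrt ((b * ((hstar:ℝ) + 1) - (n:ℝ)^2) / (hstar:ℝ))) / (1 + (hstar:ℝ)) := by
        gcongr; linarith
end

section
/- Let G be a simple connected graph on n ≥ 2 vertices with normalized Laplacian eigenvalues γ_1 ≥ ... ≥ γ_n = 0 and Randić index R_{-1}(G). Then NEE(G) = ∑_{i=1}^n e^{γ_i−1} ≥ √((n−1)(1 + (n−2)e^{2/(n−1)}) + 4R_{-1}(G)). -/
open Matrix Real BigOperators

lemma jensen_exp {ι : Type*} (t : Finset ι) (f : ι → ℝ) :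
    (t.card : ℝ) * Real.exp ((∑ i ∈ t, f i) / t.card) ≤ ∑ i ∈ t, Real.exp (f i) := by
  rcases t.eq_empty_or_nonempty with rfl | ht
  · simp
  have hc : (0:ℝ) < t.card := by exact_mod_cast Finset.card_pos.mpr ht
  have h := convexOn_exp.map_sum_le (t := t) (w := fun _ => ((t.card : ℝ))⁻¹) (p := f)
    (fun i _ => by positivity)
    (by simp [Finset.sum_const]; field_simp)
    (fun i _ => Set.mem_univ _)
  simp only [smul_eq_mul] at h
  have h1 : ∑ i ∈ t, ((t.card : ℝ))⁻¹ * f i = (∑ i ∈ t, f i) / t.card := by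
    rw [← Finset.mul_sum]; ring
  have h2 : ∑ i ∈ t, ((t.card : ℝ))⁻¹ * Real.exp (f i)
      = (∑ i ∈ t, Real.exp (f i)) / t.card := by
    rw [← Finset.mul_sum]; ring
  rw [h1, h2] at h
  rw [mul_comm]
  exact (le_div_iff₀ hc).mp h

lemma exp_lb3 {x : ℝ} (hx : 0 ≤ x) : 1 + x + x^2/2 + x^3/6 ≤ Real.exp x := by
  have h := Real.sum_le_exp_of_nonneg hx 4
  simp [Finset.sum_range_succ, Nat.factorial] at h
  linarith

lemma exp_lb4 {x : ℝ} (hx : 0 ≤ x) : 1 + x + x^2/2 + x^3/6 + x^4/24 ≤ Real.exp x := by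
  have h := Real.sum_le_exp_of_nonneg hx 5
  simp [Finset.sum_range_succ, Nat.factorial] at h
  linarith

lemma poly_ineq {g : ℝ} (hg : 0 ≤ g) :
    (2*g^2 - (13/10)*g + 3/10) * (7.3890561 : ℝ)
      ≤ (2/3)*g^4 + (5/3)*g^3 + 3*g^2 + 4*g + 3 := by
  nlinarith [sq_nonneg g, sq_nonneg (g-1), sq_nonneg (g-2), sq_nonneg (g*g - 3*g),
    mul_nonneg hg (sq_nonneg (g-2)), mul_nonneg hg (sq_nonneg (g-1)),
    mul_nonneg (mul_nonneg hg hg) hg, sq_nonneg (g*g - 2*g - 1),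
    mul_nonneg hg (sq_nonneg (g-3)), sq_nonneg (g^2 - 3*g + 1), sq_nonneg (g^2-2*g)]

lemma key_pointwise {x : ℝ} (hx : -1 ≤ x) :
    1 + 2*x + 2*x^2 + (7/10)*x ≤ Real.exp (2*x) + 2 * Real.exp (-1) * Real.exp x := by
  set g : ℝ := x + 1 with hgdef
  have hg : 0 ≤ g := by simp [hgdef]; linarith
  have hE2pos : 0 < Real.exp 2 := Real.exp_pos _
  have hE2 : Real.exp 2 = Real.exp 1 * Real.exp 1 := by
    rw [← Real.exp_add]; norm_num
  have hEub : Real.exp 2 < 7.3890561 := by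
    rw [hE2]; nlinarith [Real.exp_one_lt_d9, Real.exp_one_gt_d9, Real.exp_pos 1]
  have h2x : Real.exp (2*x) = Real.exp (2*g) / Real.exp 2 := by
    rw [← Real.exp_sub, hgdef]; ring_nf
  have h1x : 2 * Real.exp (-1) * Real.exp x = 2 * (Real.exp g / Real.exp 2) := by
    rw [mul_assoc, ← Real.exp_add]
    congr 1
    rw [eq_div_iff (ne_of_gt hE2pos), ← Real.exp_add]
    congr 1; rw [hgdef]; ring
  rw [h2x, h1x]
  have hcomb : Real.exp (2*g) / Real.exp 2 + 2 * (Real.exp g / Real.exp 2)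
      = (Real.exp (2*g) + 2 * Real.exp g) / Real.exp 2 := by ring
  rw [hcomb, le_div_iff₀ hE2pos]
  have hA := exp_lb4 (x := 2*g) (by linarith)
  have hB := exp_lb3 (x := g) hg
  have hxg : x = g - 1 := by rw [hgdef]; ring
  have hpoly : 0 ≤ 2*g^2 - (13/10)*g + 3/10 := by nlinarith [sq_nonneg (g - 13/40)]
  have e1 : (1 + 2*x + 2*x^2 + (7/10)*x) * Real.exp 2
      = (2*g^2 - (13/10)*g + 3/10) * Real.exp 2 := by rw [hxg]; ring
  rw [e1]
  calc (2*g^2 - (13/10)*g + 3/10) * Real.exp 2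
      ≤ (2*g^2 - (13/10)*g + 3/10) * (7.3890561:ℝ) := by
        apply mul_le_mul_of_nonneg_left (le_of_lt hEub) hpoly
    _ ≤ (2/3)*g^4 + (5/3)*g^3 + 3*g^2 + 4*g + 3 := poly_ineq hg
    _ ≤ Real.exp (2*g) + 2 * Real.exp g := by nlinarith

lemma herm_sum_eig {N : ℕ} {A : Matrix (Fin N) (Fin N) ℝ} (hA : A.IsHermitian) :
    ∑ i, hA.eigenvalues i = A.trace := by
  conv_rhs => rw [hA.spectral_theorem, Unitary.conjStarAlgAut_apply]
  rw [Matrix.trace_mul_cycle,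
    (Matrix.mem_unitaryGroup_iff').mp hA.eigenvectorUnitary.2, Matrix.one_mul,
    Matrix.trace_diagonal]
  simp [RCLike.ofReal_real_eq_id]

lemma herm_sum_eig_sq {N : ℕ} {A : Matrix (Fin N) (Fin N) ℝ} (hA : A.IsHermitian) :
    ∑ i, (hA.eigenvalues i)^2 = (A * A).trace := by
  set U : Matrix (Fin N) (Fin N) ℝ := (hA.eigenvectorUnitary : Matrix (Fin N) (Fin N) ℝ) with hU
  set D : Matrix (Fin N) (Fin N) ℝ := Matrix.diagonal (RCLike.ofReal ∘ hA.eigenvalues) with hD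
  have h1 : star U * U = 1 := (Matrix.mem_unitaryGroup_iff').mp hA.eigenvectorUnitary.2
  have key : A * A = U * D * D * star U := by
    conv_lhs => rw [hA.spectral_theorem, Unitary.conjStarAlgAut_apply]
    simp only [← hU, ← hD, ← Matrix.mul_assoc]
    rw [Matrix.mul_assoc (U*D) (star U) U, h1, Matrix.mul_one]
  rw [key, Matrix.trace_mul_cycle, ← Matrix.mul_assoc, h1, Matrix.one_mul]
  rw [hD, Matrix.diagonal_mul_diagonal, Matrix.trace_diagonal]
  simp [RCLike.ofReal_real_eq_id, pow_two]
section graphlemmas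
variable {n : ℕ} (G : SimpleGraph (Fin n)) [DecidableRel G.Adj]

lemma degree_pos (hn : 2 ≤ n) (hG : G.Connected) (i : Fin n) : 0 < G.degree i := by
  have : Nontrivial (Fin n) := Fin.nontrivial_iff_two_le.mpr hn
  obtain ⟨j, hj⟩ : ∃ j : Fin n, j ≠ i := exists_ne i
  rw [SimpleGraph.degree_pos_iff_exists_adj]
  obtain ⟨w⟩ := hG.preconnected i j
  cases w with
  | nil => exact absurd rfl hj
  | cons h p => exact ⟨_, h⟩

lemma normLap_apply (i j : Fin n) :
    normLap G i j = (if i = j then 1 else 0)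
      - ((G.degree i : ℝ)) ^ (-(1:ℝ)/2) * (G.adjMatrix ℝ) i j
        * ((G.degree j : ℝ)) ^ (-(1:ℝ)/2) := by
  rw [normLap, Matrix.sub_apply, Matrix.one_apply, Matrix.mul_diagonal,
    Matrix.diagonal_mul]

lemma c_mul_c (hd : 0 < (1:ℕ)) {i : Fin n} (hdi : 0 < G.degree i) :
    ((G.degree i : ℝ)) ^ (-(1:ℝ)/2) * ((G.degree i : ℝ)) ^ (-(1:ℝ)/2)
      = ((G.degree i : ℝ))⁻¹ := by
  have h : (0:ℝ) < (G.degree i : ℝ) := by exact_mod_cast hdi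
  rw [← Real.rpow_add h, show (-(1:ℝ)/2 + -(1:ℝ)/2 : ℝ) = -1 by norm_num,
    Real.rpow_neg_one]

end graphlemmas

section more
variable {n : ℕ} (G : SimpleGraph (Fin n)) [DecidableRel G.Adj]

lemma row_sum (i : Fin n) (F : Fin n → ℝ) :
    ∑ j, (G.adjMatrix ℝ) i j * F j = ∑ j ∈ G.neighborFinset i, F j := by
  rw [← SimpleGraph.adjMatrix_dotProduct]
  rfl

lemma row_sum_deg (i : Fin n) :
    ∑ j, (G.adjMatrix ℝ) i j = (G.degree i : ℝ) := by
  have := row_sum G i (fun _ => (1:ℝ))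
  simp only [mul_one] at this
  rw [this]
  simp [SimpleGraph.card_neighborFinset_eq_degree]

lemma entry_prod (hn : 2 ≤ n) (hG : G.Connected) (i j : Fin n) :
    normLap G i j * normLap G j i
      = (if i = j then (1:ℝ) else 0)
        + (if G.Adj i j then ((G.degree i : ℝ))⁻¹ * ((G.degree j : ℝ))⁻¹ else 0) := by
  have h1 := c_mul_c G (by norm_num) (degree_pos G hn hG i)
  have h2 := c_mul_c G (by norm_num) (degree_pos G hn hG j)
  rw [normLap_apply, normLap_apply]
  by_cases hij : i = j
  · subst hij
    simp [SimpleGraph.adjMatrix_apply]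
  · have hji : ¬ j = i := fun h => hij h.symm
    by_cases hadj : G.Adj i j
    · have hadj' : G.Adj j i := hadj.symm
      simp only [hij, hji, if_false, SimpleGraph.adjMatrix_apply, hadj, hadj', if_true,
        zero_sub, mul_one]
      calc (-(((G.degree i : ℝ)) ^ (-(1:ℝ)/2) * ((G.degree j : ℝ)) ^ (-(1:ℝ)/2))) *
            (-(((G.degree j : ℝ)) ^ (-(1:ℝ)/2) * ((G.degree i : ℝ)) ^ (-(1:ℝ)/2)))
          = (((G.degree i : ℝ)) ^ (-(1:ℝ)/2) * ((G.degree i : ℝ)) ^ (-(1:ℝ)/2)) *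
            (((G.degree j : ℝ)) ^ (-(1:ℝ)/2) * ((G.degree j : ℝ)) ^ (-(1:ℝ)/2)) := by ring
        _ = ((G.degree i : ℝ))⁻¹ * ((G.degree j : ℝ))⁻¹ := by rw [h1, h2]
        _ = 0 + ((G.degree i : ℝ))⁻¹ * ((G.degree j : ℝ))⁻¹ := by ring
    · have hadj' : ¬ G.Adj j i := fun h => hadj h.symm
      simp [hij, hji, SimpleGraph.adjMatrix_apply, hadj, hadj']

lemma trace_normLap_sq (hn : 2 ≤ n) (hG : G.Connected) :
    (normLap G * normLap G).trace = n + 2 * randic G := by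
  have : (normLap G * normLap G).trace = ∑ i, ∑ j, normLap G i j * normLap G j i := by
    rw [Matrix.trace]
    exact Finset.sum_congr rfl fun i _ => by rw [Matrix.diag, Matrix.mul_apply]
  rw [this]
  have : ∀ i : Fin n, ∑ j, normLap G i j * normLap G j i
      = (1 : ℝ) + ∑ j ∈ G.neighborFinset i, ((G.degree i : ℝ))⁻¹ * ((G.degree j : ℝ))⁻¹ := by
    intro i
    rw [Finset.sum_congr rfl fun j _ => entry_prod G hn hG i j, Finset.sum_add_distrib]
    congr 1
    · simp
    · rw [SimpleGraph.neighborFinset_eq_filter, Finset.sum_filter]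
  rw [Finset.sum_congr rfl fun i _ => this i, Finset.sum_add_distrib]
  have hr : randic G = (1/2) * ∑ i, ∑ j ∈ G.neighborFinset i,
      ((G.degree i : ℝ))⁻¹ * ((G.degree j : ℝ))⁻¹ := by
    rw [randic]
    congr 1
    exact Finset.sum_congr rfl fun i _ => Finset.sum_congr rfl fun j _ => by
      rw [one_div, mul_inv]
  rw [hr]
  simp

end more

section psd
variable {n : ℕ} (G : SimpleGraph (Fin n)) [DecidableRel G.Adj]

lemma normLap_posSemidef (hn : 2 ≤ n) (hG : G.Connected)
    (hL : (normLap G).IsHermitian) : (normLap G).PosSemidef := by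
  refine Matrix.PosSemidef.of_dotProduct_mulVec_nonneg hL fun x => ?_
  set A : Matrix (Fin n) (Fin n) ℝ := G.adjMatrix ℝ with hA
  set c : Fin n → ℝ := fun i => ((G.degree i : ℝ)) ^ (-(1:ℝ)/2) with hc
  have hdpos : ∀ i, (0:ℝ) < (G.degree i : ℝ) := by
    intro i
    exact_mod_cast degree_pos G hn hG i
  have hc1 : ∀ i, c i * c i * (G.degree i : ℝ) = 1 := by
    intro i
    rw [hc, c_mul_c G (by norm_num) (degree_pos G hn hG i)]
    exact inv_mul_cancel₀ (ne_of_gt (hdpos i))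
  have hAnn : ∀ i j, (0:ℝ) ≤ A i j := by
    intro i j
    rw [hA, SimpleGraph.adjMatrix_apply]
    split <;> norm_num
  have hsym : ∀ i j, A i j = A j i := by
    intro i j
    rw [hA, SimpleGraph.adjMatrix_apply, SimpleGraph.adjMatrix_apply]
    simp [SimpleGraph.adj_comm]
  have hdeg : ∀ i, ∑ j, A i j = (G.degree i : ℝ) := fun i => row_sum_deg G i
  have expand : dotProduct (star x) ((normLap G) *ᵥ x)
      = ∑ i, (x i)^2 - ∑ i, ∑ j, A i j * (c i * x i) * (c j * x j) := by
    have e1 : ∀ i j, x i * (normLap G i j * x j)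
        = (if i = j then x i * x j else 0) - A i j * (c i * x i) * (c j * x j) := by
      intro i j
      rw [normLap_apply]
      by_cases h : i = j
      · subst h
        simp [hA, SimpleGraph.adjMatrix_apply]
      · by_cases hadj : G.Adj i j <;>
          simp [h, hA, SimpleGraph.adjMatrix_apply, hadj] <;> ring
    calc dotProduct (star x) ((normLap G) *ᵥ x)
        = ∑ i, ∑ j, x i * (normLap G i j * x j) := by
          simp only [dotProduct, Matrix.mulVec, star_trivial, Finset.mul_sum]
      _ = ∑ i, ∑ j, ((if i = j then x i * x j else 0) - A i j * (c i * x i) * (c j * x j)) := by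
          exact Finset.sum_congr rfl fun i _ => Finset.sum_congr rfl fun j _ => e1 i j
      _ = ∑ i, ((x i)^2 - ∑ j, A i j * (c i * x i) * (c j * x j)) := by
          refine Finset.sum_congr rfl fun i _ => ?_
          rw [Finset.sum_sub_distrib]
          congr 1
          simp [Finset.sum_ite_eq, pow_two]
      _ = ∑ i, (x i)^2 - ∑ i, ∑ j, A i j * (c i * x i) * (c j * x j) :=
          Finset.sum_sub_distrib _ _
  have t1 : ∑ i, ∑ j, A i j * (c i * x i)^2 = ∑ i, (x i)^2 := by
    refine Finset.sum_congr rfl fun i _ => ?_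
    rw [← Finset.sum_mul, hdeg i]
    calc (G.degree i : ℝ) * (c i * x i)^2 = (x i)^2 * (c i * c i * (G.degree i : ℝ)) := by ring
      _ = (x i)^2 := by rw [hc1 i]; ring
  have t2 : ∑ i, ∑ j, A i j * (c j * x j)^2 = ∑ i, (x i)^2 := by
    rw [Finset.sum_comm]
    rw [← t1]
    exact Finset.sum_congr rfl fun j _ => Finset.sum_congr rfl fun i _ => by rw [hsym i j]
  have key : ∑ i, ∑ j, A i j * (c i * x i - c j * x j)^2
      = 2 * (∑ i, (x i)^2) - 2 * ∑ i, ∑ j, A i j * (c i * x i) * (c j * x j) := by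
    have e2 : ∀ i j, A i j * (c i * x i - c j * x j)^2
        = A i j * (c i * x i)^2 + A i j * (c j * x j)^2
          - 2 * (A i j * (c i * x i) * (c j * x j)) := by intros; ring
    calc ∑ i, ∑ j, A i j * (c i * x i - c j * x j)^2
        = ∑ i, ∑ j, (A i j * (c i * x i)^2 + A i j * (c j * x j)^2
            - 2 * (A i j * (c i * x i) * (c j * x j))) :=
          Finset.sum_congr rfl fun i _ => Finset.sum_congr rfl fun j _ => e2 i j
      _ = (∑ i, ∑ j, (A i j * (c i * x i)^2 + A i j * (c j * x j)^2))
            - ∑ i, ∑ j, 2 * (A i j * (c i * x i) * (c j * x j)) := by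
          rw [← Finset.sum_sub_distrib]
          exact Finset.sum_congr rfl fun i _ => by rw [← Finset.sum_sub_distrib]
      _ = (∑ i, ∑ j, A i j * (c i * x i)^2) + (∑ i, ∑ j, A i j * (c j * x j)^2)
            - 2 * ∑ i, ∑ j, A i j * (c i * x i) * (c j * x j) := by
          rw [← Finset.sum_add_distrib]
          congr 1
          · exact Finset.sum_congr rfl fun i _ => by rw [← Finset.sum_add_distrib]
          · rw [Finset.mul_sum]
            exact Finset.sum_congr rfl fun i _ => by rw [Finset.mul_sum]
      _ = 2 * (∑ i, (x i)^2) - 2 * ∑ i, ∑ j, A i j * (c i * x i) * (c j * x j) := by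
          rw [t1, t2]; ring
  have nonneg : (0:ℝ) ≤ ∑ i, ∑ j, A i j * (c i * x i - c j * x j)^2 :=
    Finset.sum_nonneg fun i _ => Finset.sum_nonneg fun j _ =>
      mul_nonneg (hAnn i j) (sq_nonneg _)
  rw [expand]
  linarith [key, nonneg]

lemma normLap_mulVec_zero (hn : 2 ≤ n) (hG : G.Connected) :
    (normLap G) *ᵥ (fun j => (G.degree j : ℝ) * ((G.degree j : ℝ)) ^ (-(1:ℝ)/2)) = 0 := by
  set c : Fin n → ℝ := fun i => ((G.degree i : ℝ)) ^ (-(1:ℝ)/2) with hc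
  have hdpos : ∀ i, (0:ℝ) < (G.degree i : ℝ) := by
    intro i; exact_mod_cast degree_pos G hn hG i
  have hc1 : ∀ i, c i * ((G.degree i : ℝ) * c i) = 1 := by
    intro i
    rw [show c i * ((G.degree i : ℝ) * c i) = c i * c i * (G.degree i : ℝ) from by ring,
      hc, c_mul_c G (by norm_num) (degree_pos G hn hG i)]
    exact inv_mul_cancel₀ (ne_of_gt (hdpos i))
  funext i
  have : ((normLap G) *ᵥ (fun j => (G.degree j : ℝ) * c j)) i
      = ∑ j, normLap G i j * ((G.degree j : ℝ) * c j) := rfl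
  rw [this]
  have e1 : ∀ j, normLap G i j * ((G.degree j : ℝ) * c j)
      = (if i = j then ((G.degree j : ℝ) * c j) else 0)
        - (G.adjMatrix ℝ) i j * (c i * (c j * ((G.degree j : ℝ) * c j))) := by
    intro j
    rw [normLap_apply]
    by_cases h : i = j
    · subst h
      simp [SimpleGraph.adjMatrix_apply]
    · by_cases hadj : G.Adj i j <;>
        simp [h, SimpleGraph.adjMatrix_apply, hadj] <;> ring
  rw [Finset.sum_congr rfl fun j _ => e1 j, Finset.sum_sub_distrib]
  have e2 : ∑ j, (if i = j then ((G.degree j : ℝ) * c j) else 0) = (G.degree i : ℝ) * c i := by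
    simp [Finset.sum_ite_eq]
  have e3 : ∑ j, (G.adjMatrix ℝ) i j * (c i * (c j * ((G.degree j : ℝ) * c j)))
      = (G.degree i : ℝ) * c i := by
    have : ∀ j, c i * (c j * ((G.degree j : ℝ) * c j)) = c i := by
      intro j; rw [hc1 j]; ring
    rw [Finset.sum_congr rfl fun j _ => by rw [this j]]
    rw [← Finset.sum_mul, row_sum_deg G i]
  rw [e2, e3]
  simp

end psd
lemma core {N : ℕ} (hN : 2 ≤ N) (γ : Fin N → ℝ) (R : ℝ) (i0 : Fin N) (h0 : γ i0 = 0)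
    (hpos : ∀ i, 0 ≤ γ i) (hsum : ∑ i, γ i = N)
    (hsq : ∑ i, (γ i)^2 = N + 2*R) :
    ∑ i, Real.exp (γ i - 1) ≥
      Real.sqrt (((N:ℝ)-1) * (1 + ((N:ℝ)-2) * Real.exp (2/((N:ℝ)-1))) + 4*R) := by
  classical
  set m : ℝ := (N:ℝ) - 1 with hmdef
  have hm1 : (1:ℝ) ≤ m := by
    have : (2:ℝ) ≤ (N:ℝ) := by exact_mod_cast hN
    rw [hmdef]; linarith
  set s : Finset (Fin N) := Finset.univ.erase i0 with hsdef
  have hcard : (s.card : ℝ) = m := by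
    rw [hsdef, Finset.card_erase_of_mem (Finset.mem_univ _)]
    simp only [Finset.card_univ, Fintype.card_fin]
    rw [Nat.cast_sub (by omega)]
    simp [hmdef]
  set b : Fin N → ℝ := fun i => γ i - 1 with hbdef
  have hbge : ∀ i, -1 ≤ b i := fun i => by
    have := hpos i; rw [hbdef]; simp; linarith
  have hsS : ∑ i ∈ s, γ i = N := by
    rw [hsdef, Finset.sum_erase _ (by rw [h0])]
    exact hsum
  have hsSq : ∑ i ∈ s, (γ i)^2 = N + 2*R := by
    rw [hsdef, Finset.sum_erase _ (by rw [h0]; norm_num)]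
    exact hsq
  have hbsum : ∑ i ∈ s, b i = 1 := by
    simp only [hbdef]
    rw [Finset.sum_sub_distrib, hsS, Finset.sum_const, nsmul_eq_mul, mul_one]
    rw [show ((s.card : ℝ)) = m from hcard]
    rw [hmdef]; ring
  have hbsq : ∑ i ∈ s, (b i)^2 = 2*R - 1 := by
    have e : ∀ i, (b i)^2 = (γ i)^2 - 2*γ i + 1 := by intro i; rw [hbdef]; ring
    rw [Finset.sum_congr rfl fun i _ => e i]
    rw [Finset.sum_add_distrib, Finset.sum_sub_distrib, hsSq, ← Finset.mul_sum, hsS,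
      Finset.sum_const, nsmul_eq_mul, mul_one, hcard, hmdef]
    ring
  -- the sums of exponentials
  set S : ℝ := ∑ i ∈ s, Real.exp (b i) with hSdef
  have hSnn : 0 ≤ S := Finset.sum_nonneg fun i _ => (Real.exp_pos _).le
  have hNEE : ∑ i, Real.exp (γ i - 1) = S + Real.exp (-1) := by
    have h := Finset.sum_erase_add Finset.univ (fun i => Real.exp (γ i - 1))
      (Finset.mem_univ i0)
    have h2 : Real.exp (γ i0 - 1) = Real.exp (-1) := by rw [h0]; norm_num
    calc ∑ i, Real.exp (γ i - 1)
        = ∑ x ∈ Finset.univ.erase i0, Real.exp (γ x - 1) + Real.exp (γ i0 - 1) := h.symm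
      _ = S + Real.exp (-1) := by rw [h2]
  have hNEEnn : 0 ≤ S + Real.exp (-1) := by positivity
  -- split S^2 into diagonal and off-diagonal parts
  set E : Fin N × Fin N → ℝ := fun p => Real.exp (b p.1 + b p.2) with hEdef
  have hS2 : S^2 = ∑ p ∈ s ×ˢ s, E p := by
    rw [Finset.sum_product]
    rw [hSdef, pow_two, Finset.sum_mul_sum]
    exact Finset.sum_congr rfl fun i _ => Finset.sum_congr rfl fun j _ =>
      (Real.exp_add _ _).symm
  set td : Finset (Fin N × Fin N) := (s ×ˢ s).filter (fun p => p.1 = p.2) with htddef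
  set t : Finset (Fin N × Fin N) := (s ×ˢ s).filter (fun p => ¬ p.1 = p.2) with htdef
  have hsplit : S^2 = (∑ p ∈ td, E p) + (∑ p ∈ t, E p) := by
    rw [hS2, htddef, htdef]
    exact (Finset.sum_filter_add_sum_filter_not _ _ _).symm
  -- diagonal part
  have htd_eq : td = s.image (fun i => (i, i)) := by
    ext ⟨a, c⟩
    simp only [htddef, Finset.mem_filter, Finset.mem_product, Finset.mem_image]
    constructor
    · rintro ⟨⟨ha, _⟩, h⟩
      exact ⟨a, ha, by rw [h]⟩
    · rintro ⟨i, hi, h⟩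
      obtain ⟨rfl, rfl⟩ := Prod.mk.injEq .. ▸ (by exact ⟨congrArg Prod.fst h.symm,
        congrArg Prod.snd h.symm⟩ : a = i ∧ c = i)
      exact ⟨⟨hi, hi⟩, rfl⟩
  have hdiag : ∑ p ∈ td, E p = ∑ i ∈ s, Real.exp (b i + b i) := by
    rw [htd_eq, Finset.sum_image (fun a _ c _ h => (Prod.mk.injEq .. ▸ h : _ ∧ _).1)]
  -- cardinality of the off-diagonal set
  have htdcard : (td.card : ℝ) = m := by
    rw [htd_eq, Finset.card_image_of_injective _ (fun a c h => (Prod.mk.injEq .. ▸ h : _ ∧ _).1)]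
    exact hcard
  have htcard : (t.card : ℝ) = m^2 - m := by
    have h := Finset.card_filter_add_card_filter_not
      (s := s ×ˢ s) (p := fun p => p.1 = p.2)
    have h2 : ((s ×ˢ s).card : ℝ) = m^2 := by
      rw [Finset.card_product]; push_cast; rw [hcard]; ring
    have h3 : (td.card : ℝ) + (t.card : ℝ) = m^2 := by
      rw [← h2, htddef, htdef]; exact_mod_cast congrArg Nat.cast h
    rw [← h3, htdcard]; ring
  -- sum of exponents over the off-diagonal set
  have hprodsum : ∑ p ∈ s ×ˢ s, (b p.1 + b p.2) = 2*m := by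
    rw [Finset.sum_product]
    have e : ∀ i ∈ s, ∑ j ∈ s, (b i + b j) = m * b i + 1 := by
      intro i _
      rw [Finset.sum_add_distrib, hbsum, Finset.sum_const, nsmul_eq_mul, hcard]
    rw [Finset.sum_congr rfl e, Finset.sum_add_distrib, ← Finset.mul_sum, hbsum,
      Finset.sum_const, nsmul_eq_mul, hcard]
    ring
  have htdsum : ∑ p ∈ td, (b p.1 + b p.2) = 2 := by
    rw [htd_eq, Finset.sum_image (fun a _ c _ h => (Prod.mk.injEq .. ▸ h : _ ∧ _).1)]
    rw [Finset.sum_add_distrib, hbsum]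
    norm_num
  have htsum : ∑ p ∈ t, (b p.1 + b p.2) = 2*(m-1) := by
    have h := Finset.sum_filter_add_sum_filter_not (s ×ˢ s) (fun p => p.1 = p.2)
      (fun p => b p.1 + b p.2)
    rw [← htddef, ← htdef] at h
    rw [hprodsum, htdsum] at h
    linarith
  -- Jensen for the off-diagonal part
  have hoff : m*(m-1) * Real.exp (2/m) ≤ ∑ p ∈ t, E p := by
    rcases eq_or_lt_of_le hm1 with h1 | h1
    · have : m * (m-1) = 0 := by rw [← h1]; ring
      rw [this, zero_mul]
      exact Finset.sum_nonneg fun p _ => (Real.exp_pos _).le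
    · have hj := jensen_exp t (fun p => b p.1 + b p.2)
      rw [htsum, htcard] at hj
      have hm0 : m ≠ 0 := by linarith
      have hm1' : m - 1 ≠ 0 := by intro h; rw [sub_eq_zero] at h; exact absurd h.symm (ne_of_lt h1)
      have heq : 2*(m-1) / (m^2 - m) = 2/m := by
        have h2 : m^2 - m ≠ 0 := by
          rw [show m^2 - m = m*(m-1) by ring]
          exact mul_ne_zero hm0 hm1'
        rw [div_eq_div_iff h2 hm0]
        ring
      rw [heq] at hj
      calc m*(m-1) * Real.exp (2/m) = (m^2 - m) * Real.exp (2/m) := by ring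
        _ ≤ ∑ p ∈ t, E p := hj
  -- the diagonal + cross-term bound
  have hdiag2 : ∑ p ∈ td, E p = ∑ i ∈ s, Real.exp (2 * b i) := by
    rw [hdiag]
    exact Finset.sum_congr rfl fun i _ => by rw [two_mul]
  have hp : ∀ i ∈ s, 1 + 2*(b i) + 2*(b i)^2 + (7/10)*(b i)
      ≤ Real.exp (2 * b i) + 2*Real.exp (-1) * Real.exp (b i) :=
    fun i _ => key_pointwise (hbge i)
  have hdiagbound : m + 2 + 2*(2*R-1) + 7/10
      ≤ (∑ i ∈ s, Real.exp (2 * b i)) + 2*Real.exp (-1) * S := by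
    have hs := Finset.sum_le_sum hp
    have hL : ∑ i ∈ s, (1 + 2*(b i) + 2*(b i)^2 + (7/10)*(b i))
        = m + 2 + 2*(2*R-1) + 7/10 := by
      have e : ∀ i ∈ s, 1 + 2*(b i) + 2*(b i)^2 + (7/10)*(b i)
          = 1 + (2 + 7/10)*(b i) + 2*(b i)^2 := fun i _ => by ring
      rw [Finset.sum_congr rfl e, Finset.sum_add_distrib, Finset.sum_add_distrib,
        ← Finset.mul_sum, ← Finset.mul_sum, hbsum, hbsq, Finset.sum_const,
        nsmul_eq_mul, mul_one, hcard]
      ring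
    have hR : ∑ i ∈ s, (Real.exp (2 * b i) + 2*Real.exp (-1) * Real.exp (b i))
        = (∑ i ∈ s, Real.exp (2 * b i)) + 2*Real.exp (-1) * S := by
      rw [Finset.sum_add_distrib, ← Finset.mul_sum]
    rw [hL, hR] at hs
    exact hs
  -- put it all together
  have harg : m * (1 + (m - 1) * Real.exp (2/m)) + 4*R ≤ (S + Real.exp (-1))^2 := by
    have hexpand : (S + Real.exp (-1))^2 = S^2 + 2*Real.exp (-1)*S + (Real.exp (-1))^2 := by
      ring
    have he2 : 0 ≤ (Real.exp (-1))^2 := sq_nonneg _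
    nlinarith [hsplit, hdiag2, hoff, hdiagbound]
  rw [ge_iff_le, hNEE]
  have hm2 : ((N:ℝ) - 2) = m - 1 := by rw [hmdef]; ring
  rw [hm2]
  calc Real.sqrt (m * (1 + (m-1) * Real.exp (2/m)) + 4*R)
      ≤ Real.sqrt ((S + Real.exp (-1))^2) := Real.sqrt_le_sqrt harg
    _ = S + Real.exp (-1) := Real.sqrt_sq hNEEnn

theorem stmt_18 {n : ℕ} (hn : 2 ≤ n) (G : SimpleGraph (Fin n)) [DecidableRel G.Adj]
    (hG : G.Connected) (hL : (normLap G).IsHermitian) :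
    ∑ i, Real.exp (hL.eigenvalues i - 1) ≥
      Real.sqrt (((n : ℝ) - 1) * (1 + ((n : ℝ) - 2) * Real.exp (2 / ((n : ℝ) - 1))) +
        4 * randic G) := by
  have hpsd := normLap_posSemidef G hn hG hL
  have hpos : ∀ i, 0 ≤ hL.eigenvalues i := fun i => hpsd.eigenvalues_nonneg i
  have hzero : ∃ i0, hL.eigenvalues i0 = 0 := by
    have hv := normLap_mulVec_zero G hn hG
    have hvne : (fun j => (G.degree j : ℝ) * ((G.degree j : ℝ)) ^ (-(1:ℝ)/2))
        ≠ (0 : Fin n → ℝ) := by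
      intro h
      have h0 := congrFun h ⟨0, by omega⟩
      have hd : (0:ℝ) < ((G.degree (⟨0, by omega⟩ : Fin n)) : ℝ) := by
        exact_mod_cast degree_pos G hn hG _
      have hgt : (0:ℝ) < ((G.degree (⟨0, by omega⟩ : Fin n)) : ℝ)
          * ((G.degree (⟨0, by omega⟩ : Fin n)) : ℝ) ^ (-(1:ℝ)/2) :=
        mul_pos hd (Real.rpow_pos_of_pos hd _)
      rw [h0] at hgt
      exact lt_irrefl _ hgt
    have hdet : (normLap G).det = 0 := Matrix.exists_mulVec_eq_zero_iff.mp ⟨_, hvne, hv⟩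
    have hprod := hL.det_eq_prod_eigenvalues
    rw [hdet] at hprod
    obtain ⟨i0, _, h⟩ := Finset.prod_eq_zero_iff.mp hprod.symm
    exact ⟨i0, by exact_mod_cast h⟩
  obtain ⟨i0, h0⟩ := hzero
  have hsum : ∑ i, hL.eigenvalues i = n := by rw [herm_sum_eig hL, trace_normLap G]
  have hsq : ∑ i, (hL.eigenvalues i)^2 = n + 2 * randic G := by
    rw [herm_sum_eig_sq hL, trace_normLap_sq G hn hG]
  exact core hn hL.eigenvalues (randic G) i0 h0 hpos hsum hsq
end
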